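/- Let k ≥ 0, η = 7/3, h₀ > 0 and q₀ ∈ ℝ. Define q : [0, ∞) → ℝ by q(t) = h₀^η q₀ / (h₀^η + k t |q₀|). Then q(0) = q₀ and for every t ≥ 0, q is differentiable at t with q'(t) = −k q(t) |q(t)| h₀^{−η}. In other words, (h(t), q(t)) = (h₀, h₀^η q₀/(h₀^η + k t |q₀|)) is the exact solution of the friction ODE system h' = 0, q' = −k q |q| h^{−η} with initial data (h₀, q₀). -/

import Mathlib

/-- Exact solution of the 1D friction ODE: with `η = 7/3`, the function
`q(t) = h₀^η q₀/(h₀^η + k t |q₀|)` satisfies `q(0) = q₀` and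
`q'(t) = −k q(t) |q(t)| h₀^{−η}` for all `t ≥ 0`. -/
theorem friction_ode_exact_solution_1d (k h₀ q₀ : ℝ)
    (hk : 0 ≤ k) (hh₀ : 0 < h₀) :
    let η : ℝ := 7 / 3
    let q : ℝ → ℝ := fun t => h₀ ^ η * q₀ / (h₀ ^ η + k * t * |q₀|)
    q 0 = q₀ ∧ ∀ t : ℝ, 0 ≤ t →
      HasDerivAt q (-k * q t * |q t| * h₀ ^ (-η)) t := by
  intro η q
  have hA : 0 < h₀ ^ η := Real.rpow_pos_of_pos hh₀ η
  constructor
  · show h₀ ^ η * q₀ / (h₀ ^ η + k * 0 * |q₀|) = q₀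
    rw [mul_zero, zero_mul, add_zero]; field_simp
  · intro t ht
    have hg : 0 < h₀ ^ η + k * t * |q₀| := by positivity
    have hd : HasDerivAt (fun s : ℝ => h₀ ^ η + k * s * |q₀|) (k * |q₀|) t := by
      have : HasDerivAt (fun s : ℝ => k * s * |q₀|) (k * 1 * |q₀|) t :=
        ((hasDerivAt_id t).const_mul k).mul_const |q₀|
      have h2 := (hasDerivAt_const t (h₀ ^ η)).add this
      simp only [zero_add, mul_one] at h2
      exact h2
    have hD : HasDerivAt q
        ((0 * (h₀ ^ η + k * t * |q₀|) - (h₀ ^ η * q₀) * (k * |q₀|)) /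
          (h₀ ^ η + k * t * |q₀|) ^ 2) t :=
      (hasDerivAt_const t (h₀ ^ η * q₀)).div hd hg.ne'
    convert hD using 1
    have habs : |q t| = h₀ ^ η * |q₀| / (h₀ ^ η + k * t * |q₀|) := by
      show |h₀ ^ η * q₀ / (h₀ ^ η + k * t * |q₀|)| = _
      rw [abs_div, abs_mul, abs_of_pos hA, abs_of_pos hg]
    rw [habs, Real.rpow_neg hh₀.le]
    show -k * (h₀ ^ η * q₀ / (h₀ ^ η + k * t * |q₀|)) * _ * (h₀ ^ η)⁻¹ = _
    field_simp
    ring
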